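/- For every subgroup H ≤ G, H^1(H, Q) = 0; that is, the G-lattice Q = A_2(G12) ⊕ K3 ⊕ K4 is H^1-trivial. -/

import Mathlib

open MonoidAlgebra

set_option maxHeartbeats 1000000
set_option synthInstance.maxHeartbeats 400000

noncomputable section

/-! ## Generic (unbundled) group-cohomology notions in low degree -/

/-- `f : G → A` is a 1-cocycle for the (unbundled) action `act`. -/
def IsOneCocycle {G : Type*} [Group G] {A : Type*} [AddCommGroup A]
    (act : G → A → A) (f : G → A) : Prop :=
  ∀ g h : G, f (g * h) = act g (f h) + f g

/-- `f : G → A` is a 1-coboundary for the (unbundled) action `act`. -/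
def IsOneCoboundary {G : Type*} [Group G] {A : Type*} [AddCommGroup A]
    (act : G → A → A) (f : G → A) : Prop :=
  ∃ a : A, ∀ g : G, f g = act g a - a

/-- `f : G → G → A` is a 2-coboundary for the (unbundled) action `act`. -/
def IsTwoCoboundary {G : Type*} [Group G] {A : Type*} [AddCommGroup A]
    (act : G → A → A) (f : G → G → A) : Prop :=
  ∃ c : G → A, ∀ g h : G, f g h = act g (c h) - c (g * h) + c g

/-- restriction of an (unbundled) action to a subgroup. -/
def resAct {G : Type*} [Group G] {A : Type*} (H : Subgroup G) (act : G → A → A) :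
    H → A → A := fun h => act (h : G)

/-! ## Augmentation ideal for a general group -/

/-- the augmentation map `Z[G] → Z`. -/
def augGen (G : Type*) [Group G] : MonoidAlgebra ℤ G →+* ℤ :=
  (MonoidAlgebra.lift ℤ ℤ G 1).toRingHom

/-- the augmentation ideal `I[G] ⊆ Z[G]`. -/
def IGen (G : Type*) [Group G] : Ideal (MonoidAlgebra ℤ G) := RingHom.ker (augGen G)

/-- the action of `G` on `I[G]` by left multiplication. -/
def actIGen (G : Type*) [Group G] (g : G) (y : ↥(IGen G)) : ↥(IGen G) :=
  ⟨of ℤ G g * y.val, by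
    have h0 : augGen G y.val = 0 := y.2
    simp [IGen, RingHom.mem_ker, map_mul, h0]⟩

/-- the distinguished 1-cocycle `d_H : H → I[G]`, `h ↦ h - 1`. -/
def dGen {G : Type*} [Group G] (H : Subgroup G) (h : H) : ↥(IGen G) :=
  ⟨of ℤ G (h : G) - 1, by simp [IGen, RingHom.mem_ker, map_sub, augGen]⟩

/-! ## The groups of the paper -/

/-- the elementary abelian group `G₁₂` of order `p²`. -/
abbrev G12t (p : ℕ) := Multiplicative (ZMod p × ZMod p)
/-- a cyclic group of order `p`. -/
abbrev Cpt (p : ℕ) := Multiplicative (ZMod p)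
/-- the elementary abelian group `G = ⟨σ₁⟩ × ⟨σ₂⟩ × ⟨σ₃⟩ × ⟨σ₄⟩` of order `p⁴`. -/
abbrev Gp (p : ℕ) := Multiplicative (ZMod p × ZMod p × ZMod p × ZMod p)

def t1 (p : ℕ) : G12t p := Multiplicative.ofAdd (1, 0)
def t2 (p : ℕ) : G12t p := Multiplicative.ofAdd (0, 1)
def c1g (p : ℕ) : Cpt p := Multiplicative.ofAdd 1
def s1 (p : ℕ) : Gp p := Multiplicative.ofAdd (1, 0, 0, 0)
def s2 (p : ℕ) : Gp p := Multiplicative.ofAdd (0, 1, 0, 0)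
def s3 (p : ℕ) : Gp p := Multiplicative.ofAdd (0, 0, 1, 0)
def s4 (p : ℕ) : Gp p := Multiplicative.ofAdd (0, 0, 0, 1)

/-- the group ring `Z[G₁₂]`. -/
abbrev R12 (p : ℕ) := MonoidAlgebra ℤ (G12t p)
/-- the group ring `Z[⟨σ⟩]` of a cyclic group of order `p`. -/
abbrev RCp (p : ℕ) := MonoidAlgebra ℤ (Cpt p)
/-- the group ring `Z[G]`. -/
abbrev RG (p : ℕ) := MonoidAlgebra ℤ (Gp p)

/-- the quotient map `G → G₁₂ = G/G₃₄`. -/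
def π12 (p : ℕ) : Gp p →* G12t p :=
  AddMonoidHom.toMultiplicative
    { toFun := fun v => (v.1, v.2.1), map_zero' := rfl, map_add' := fun _ _ => rfl }

/-- the quotient map `G → ⟨σ₃⟩ = G/⟨σ₁,σ₂,σ₄⟩`. -/
def π3 (p : ℕ) : Gp p →* Cpt p :=
  AddMonoidHom.toMultiplicative
    { toFun := fun v => v.2.2.1, map_zero' := rfl, map_add' := fun _ _ => rfl }

/-- the quotient map `G → ⟨σ₄⟩ = G/⟨σ₁,σ₂,σ₃⟩`. -/
def π4 (p : ℕ) : Gp p →* Cpt p :=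
  AddMonoidHom.toMultiplicative
    { toFun := fun v => v.2.2.2, map_zero' := rfl, map_add' := fun _ _ => rfl }

/-- the inclusion `G₁₂ → G`. -/
def emb12 (p : ℕ) : G12t p →* Gp p :=
  AddMonoidHom.toMultiplicative
    { toFun := fun v => (v.1, v.2, 0, 0), map_zero' := rfl,
      map_add' := fun _ _ => by ext <;> simp }

/-- the subgroup `G₁₂ = ⟨σ₁, σ₂⟩ ≤ G`. -/
def G12sub (p : ℕ) : Subgroup (Gp p) := Subgroup.closure {s1 p, s2 p}
/-- the subgroup `G₃₄ = ⟨σ₃, σ₄⟩ ≤ G`. -/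
def G34sub (p : ℕ) : Subgroup (Gp p) := Subgroup.closure {s3 p, s4 p}

/-! ## The lattice `A₂(G₁₂)` and its distinguished elements -/

/-- the map `Z[G₁₂]·d₁ ⊕ Z[G₁₂]·d₂ → I[G₁₂] ⊆ Z[G₁₂]`, `dᵢ ↦ σᵢ - 1`. -/
def d12map (p : ℕ) : (R12 p × R12 p) →ₗ[R12 p] R12 p :=
  (LinearMap.toSpanSingleton (R12 p) (R12 p) (of ℤ (G12t p) (t1 p) - 1)).comp
      (LinearMap.fst (R12 p) (R12 p) (R12 p)) +
  (LinearMap.toSpanSingleton (R12 p) (R12 p) (of ℤ (G12t p) (t2 p) - 1)).comp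
      (LinearMap.snd (R12 p) (R12 p) (R12 p))

/-- the lattice `A₂(G₁₂)`, the kernel of `Z[G₁₂]·d₁ ⊕ Z[G₁₂]·d₂ → I[G₁₂]`. -/
def A2G12 (p : ℕ) : Submodule (R12 p) (R12 p × R12 p) := LinearMap.ker (d12map p)

/-- `u₁₂ = (σ₂-1)d₁ - (σ₁-1)d₂` as an element of `Z[G₁₂]·d₁ ⊕ Z[G₁₂]·d₂`. -/
def u12raw (p : ℕ) : R12 p × R12 p :=
  (of ℤ (G12t p) (t2 p) - 1, -(of ℤ (G12t p) (t1 p) - 1))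

/-- the norm element `N = 1 + g + ⋯ + g^(p-1)` of a group ring. -/
def NN (p : ℕ) {G : Type*} [CommGroup G] (g : G) : MonoidAlgebra ℤ G :=
  ∑ k ∈ Finset.range p, of ℤ G g ^ k

/-- `b₁ = N₁·d₁`. -/
def b1raw (p : ℕ) : R12 p × R12 p := (NN p (t1 p), 0)
/-- `b₂ = N₂·d₂`. -/
def b2raw (p : ℕ) : R12 p × R12 p := (0, NN p (t2 p))

lemma ofAdd_pow_p (p : ℕ) {A : Type*} [AddCommGroup A] (a : A) (h : p • a = 0) :
    (Multiplicative.ofAdd a) ^ p = 1 := by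
  rw [← ofAdd_nsmul, h]; rfl

lemma zmod_p_smul (p : ℕ) (x : ZMod p) : p • x = 0 := by
  rw [nsmul_eq_mul, ZMod.natCast_self, zero_mul]

lemma t1_pow_p (p : ℕ) : (t1 p) ^ p = 1 := by
  refine ofAdd_pow_p p _ ?_
  rw [Prod.smul_mk, zmod_p_smul, zmod_p_smul]; rfl

lemma t2_pow_p (p : ℕ) : (t2 p) ^ p = 1 := by
  refine ofAdd_pow_p p _ ?_
  rw [Prod.smul_mk, zmod_p_smul, zmod_p_smul]; rfl

lemma c1g_pow_p (p : ℕ) : (c1g p) ^ p = 1 := by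
  refine ofAdd_pow_p p _ (zmod_p_smul p _)

lemma NN_mul (p : ℕ) {G : Type*} [CommGroup G] (g : G) (h : g ^ p = 1) :
    NN p g * (of ℤ G g - 1) = 0 := by
  rw [NN, geom_sum_mul, ← map_pow, h, map_one, sub_self]

lemma u12raw_mem (p : ℕ) : u12raw p ∈ A2G12 p := by
  simp only [A2G12, LinearMap.mem_ker, d12map, LinearMap.add_apply, LinearMap.comp_apply,
    LinearMap.fst_apply, LinearMap.snd_apply, LinearMap.toSpanSingleton_apply, u12raw,
    smul_eq_mul]
  ring

lemma b1raw_mem (p : ℕ) : b1raw p ∈ A2G12 p := by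
  simp only [A2G12, LinearMap.mem_ker, d12map, LinearMap.add_apply, LinearMap.comp_apply,
    LinearMap.fst_apply, LinearMap.snd_apply, LinearMap.toSpanSingleton_apply, b1raw,
    smul_eq_mul, zero_mul, add_zero]
  exact NN_mul p _ (t1_pow_p p)

lemma b2raw_mem (p : ℕ) : b2raw p ∈ A2G12 p := by
  simp only [A2G12, LinearMap.mem_ker, d12map, LinearMap.add_apply, LinearMap.comp_apply,
    LinearMap.fst_apply, LinearMap.snd_apply, LinearMap.toSpanSingleton_apply, b2raw,
    smul_eq_mul, zero_mul, zero_add]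
  exact NN_mul p _ (t2_pow_p p)

/-- `u₁₂` as an element of `A₂(G₁₂)`. -/
def u12e (p : ℕ) : ↥(A2G12 p) := ⟨u12raw p, u12raw_mem p⟩
/-- `b₁` as an element of `A₂(G₁₂)`. -/
def b1e (p : ℕ) : ↥(A2G12 p) := ⟨b1raw p, b1raw_mem p⟩
/-- `b₂` as an element of `A₂(G₁₂)`. -/
def b2e (p : ℕ) : ↥(A2G12 p) := ⟨b2raw p, b2raw_mem p⟩

/-- the action of `G₁₂` on `A₂(G₁₂)`. -/
def actA2 (p : ℕ) (x : G12t p) (v : ↥(A2G12 p)) : ↥(A2G12 p) :=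
  of ℤ (G12t p) x • v

/-! ## The cyclic lattice `A₂(⟨σ⟩)` -/

/-- the map `Z[⟨σ⟩]·d → I[⟨σ⟩]`, `d ↦ σ - 1`. -/
def dcmap (p : ℕ) : RCp p →ₗ[RCp p] RCp p :=
  LinearMap.toSpanSingleton (RCp p) (RCp p) (of ℤ (Cpt p) (c1g p) - 1)

/-- the lattice `A₂(⟨σ⟩)` for a cyclic group of order `p`. -/
def A2C (p : ℕ) : Submodule (RCp p) (RCp p) := LinearMap.ker (dcmap p)

/-- the norm element `N = 1 + σ + ⋯ + σ^(p-1)` as an element of `A₂(⟨σ⟩)`. -/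
def NCe (p : ℕ) : ↥(A2C p) :=
  ⟨NN p (c1g p), by
    simp only [A2C, LinearMap.mem_ker, dcmap, LinearMap.toSpanSingleton_apply, smul_eq_mul]
    exact NN_mul p _ (c1g_pow_p p)⟩

/-- the action of `G` on `A₂(⟨σⱼ⟩)` through a projection `π : G → ⟨σⱼ⟩`. -/
def actCvia (p : ℕ) (π : Gp p →* Cpt p) (g : Gp p) (v : ↥(A2C p)) : ↥(A2C p) :=
  of ℤ (Cpt p) (π g) • v

/-! ## The explicit canonical 2-cocycles -/

/-- the elements `u_{m,n} ∈ A₂(G₁₂)` (equation (13) of the paper). -/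
def umn (p : ℕ) (m1 m2 n1 n2 : ℕ) : ↥(A2G12 p) :=
  (-(of ℤ (G12t p) (t1 p ^ m1) * ∑ j ∈ Finset.range n1, ∑ i ∈ Finset.range m2,
      of ℤ (G12t p) (t1 p ^ i * t2 p ^ j))) • u12e p +
  (of ℤ (G12t p) (t1 p ^ n1) * ∑ j ∈ Finset.range n2, ∑ i ∈ Finset.range m1,
      of ℤ (G12t p) (t1 p ^ i * t2 p ^ j)) • u12e p

/-- the explicit 2-cocycle `c₁₂` representing the canonical class `[c_{G₁₂}]`. -/
def c12coc (p : ℕ) (x y : G12t p) : ↥(A2G12 p) :=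
  let m1 := (Multiplicative.toAdd x).1.val
  let m2 := (Multiplicative.toAdd x).2.val
  let n1 := (Multiplicative.toAdd y).1.val
  let n2 := (Multiplicative.toAdd y).2.val
  of ℤ (G12t p) (t1 p ^ m1) • umn p 0 m2 n1 0 +
    ((m1 + n1) / p) • b1e p +
    ((m2 + n2) / p) • (of ℤ (G12t p) (t1 p ^ ((m1 + n1) % p)) • b2e p)

/-- the explicit 2-cocycle representing the canonical class of a cyclic group of
order `p` with coefficients in `A₂(⟨σ⟩)`. -/
def ccyc (p : ℕ) (x y : Cpt p) : ↥(A2C p) :=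
  if p ≤ (Multiplicative.toAdd x).val + (Multiplicative.toAdd y).val then NCe p else 0

/-! ## The lattice `Q = A₂(G₁₂) ⊕ K₃ ⊕ K₄` -/

/-- `K_j = A₂(⟨σⱼ⟩) ⊕ Z[⟨σⱼ⟩]`. -/
abbrev Kc (p : ℕ) := ↥(A2C p) × RCp p

/-- the carrier of the `G`-lattice `Q = A₂(G₁₂) ⊕ K₃ ⊕ K₄`. -/
abbrev Qc (p : ℕ) := ↥(A2G12 p) × Kc p × Kc p

/-- the action of `G` on `Q`: `G₁₂` acts naturally on `A₂(G₁₂)` and trivially on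
`K₃`, `K₄`; `⟨σⱼ⟩` acts naturally on `K_j` and trivially elsewhere. -/
def actQ (p : ℕ) (g : Gp p) (q : Qc p) : Qc p :=
  (of ℤ (G12t p) (π12 p g) • q.1,
   (of ℤ (Cpt p) (π3 p g) • q.2.1.1, of ℤ (Cpt p) (π3 p g) * q.2.1.2),
   (of ℤ (Cpt p) (π4 p g) • q.2.2.1, of ℤ (Cpt p) (π4 p g) * q.2.2.2))

/-- the 2-cocycle `ω = inf(c₁₂) - inf(c₃) - inf(c₄)` with values in `Q`. -/
def ωc (p : ℕ) (g g' : Gp p) : Qc p :=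
  (c12coc p (π12 p g) (π12 p g'),
   (-(ccyc p (π3 p g) (π3 p g')), 0),
   (-(ccyc p (π4 p g) (π4 p g')), 0))

/-- the order of the restriction of `[ω]` to a subgroup `H ≤ G` in `H²(H, Q)`. -/
def nOrd (p : ℕ) (H : Subgroup (Gp p)) : ℕ :=
  sInf {n : ℕ | 0 < n ∧
    IsTwoCoboundary (resAct H (actQ p)) fun h h' => n • ωc p (h : Gp p) (h' : Gp p)}

/-! ## The augmentation ideal `I[G]` and the lattice `M_ω` -/

/-- the augmentation map `Z[G] → Z`. -/
def aug (p : ℕ) : RG p →+* ℤ := (MonoidAlgebra.lift ℤ ℤ (Gp p) 1).toRingHom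

/-- the augmentation ideal `I[G]`. -/
def IG (p : ℕ) : Ideal (RG p) := RingHom.ker (aug p)

/-- the action of `G` on `I[G]` by left multiplication. -/
def actIG (p : ℕ) (g : Gp p) (y : ↥(IG p)) : ↥(IG p) :=
  ⟨of ℤ (Gp p) g * y.val, by
    have h0 : aug p y.val = 0 := y.2
    simp [IG, RingHom.mem_ker, map_mul, h0]⟩

/-- the 1-cocycle `d_H : H → I[G]`, `h ↦ h - 1`. -/
def dH (p : ℕ) (H : Subgroup (Gp p)) (h : H) : ↥(IG p) :=
  ⟨of ℤ (Gp p) (h : Gp p) - 1, by simp [IG, RingHom.mem_ker, map_sub, aug]⟩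

/-- the carrier of the `G`-lattice `M_ω = Q ⊕ I[G]`. -/
abbrev Mc (p : ℕ) := Qc p × ↥(IG p)

/-- the `Q`-valued correction term of the twisted action on `M_ω`:
`θ(g, Σ a_{g'} g') = Σ a_{g'} ω(g, g')`; on `y ∈ I[G]` (so `Σ a_{g'} = 0` and
`y = Σ a_{g'} (g' - 1)`) this is the `Q`-component of `g·(0, y)`. -/
def θω (p : ℕ) (g : Gp p) (y : RG p) : Qc p :=
  Finsupp.sum y.coeff fun g' a => a • ωc p g g'

/-- the twisted action of `G` on `M_ω = Q ⊕ I[G]`: `g(x,0) = (gx, 0)` and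
`g(0, g'-1) = (ω(g,g'), g(g'-1))`, extended `Z`-linearly. -/
def actM (p : ℕ) (g : Gp p) (m : Mc p) : Mc p :=
  (actQ p g m.1 + θω p g m.2.val, actIG p g m.2)

/-! ## The map `π : A₂(G₁₂) → Z/pZ` -/

/-- the `G₁₂`-module homomorphism `π : A₂(G₁₂) → Z/pZ`, determined by
`π(x·u₁₂ + y·b₁ + z·b₂) = ε(x) mod p`; concretely it sends `v = (v₁, v₂)` to
`Σ_g v₁(g)·(exponent of σ₂ in g)`. -/
def πmap (p : ℕ) (v : ↥(A2G12 p)) : ZMod p :=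
  Finsupp.sum (v : R12 p × R12 p).1.coeff fun g a => (a : ZMod p) * (Multiplicative.toAdd g).2

/-! ## The set `𝓗` of subgroups, the cochains `v_H`, and the lattice `M` -/

/-- the set of subgroups `𝓗 = {G} ∪ {⟨τ, σ₃, σ₄⟩ : τ ∈ G₁₂}`. -/
def HH (p : ℕ) : Set (Subgroup (Gp p)) :=
  insert ⊤ {H | ∃ τ ∈ G12sub p, H = Subgroup.closure {τ, s3 p, s4 p}}

/-- the 1-cochain `v_H : H₁₂ → A₂(G₁₂)`, `v_H(h̄₁) = Σ_{h̄ ∈ H₁₂} c₁₂(h̄₁, h̄)`,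
here inflated to a function of `h̄₁ ∈ G₁₂`. -/
def vH (p : ℕ) (H : Subgroup (Gp p)) (x : G12t p) : ↥(A2G12 p) :=
  ∑ᶠ h' : ↥(H.map (π12 p)), c12coc p x (h' : G12t p)

/-- the 1-cochain `f_H : H → M_ω`, `f_H(h) = (z_H(h) - v_H(h̄), n_H·(h-1))`,
built from a choice of 1-cochain `z_H : H → K₃ ⊕ K₄`. -/
def fHof (p : ℕ) (H : Subgroup (Gp p)) (zH : H → Kc p × Kc p) (h : H) : Mc p :=
  ((-(vH p H (π12 p (h : Gp p))), (zH h).1, (zH h).2),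
   (nOrd p H) • dH p H h)

/-- the carrier of the permutation lattice `P = ⊕_{H ∈ 𝓗} Z[G/H]`. -/
abbrev Pc (p : ℕ) := ∀ H : ↥(HH p), ((Gp p ⧸ (H : Subgroup (Gp p))) →₀ ℤ)

/-- the carrier of the `G`-lattice `M = M_ω ⊕ P`. -/
abbrev MC (p : ℕ) := Mc p × Pc p

/-- the action of `G` on `M = M_ω ⊕ P`, twisted by a family of 1-cocycles
`f_H : H → M_ω` (`H ∈ 𝓗`): `g(x, 0) = (gx, 0)` and
`g(0, u_{gᵢH}) = (gⱼ·f_H(h), u_{gⱼH})` where `g·gᵢ = gⱼ·h`, `h ∈ H`, and the coset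
representatives are chosen by `Quotient.out`. -/
def actMFull (p : ℕ) (fH : ∀ H : ↥(HH p), (↥(H.val) → Mc p))
    (g : Gp p) (m : MC p) : MC p :=
  (actM p g m.1 +
     ∑ᶠ H : ↥(HH p), Finsupp.sum (m.2 H) fun c a =>
       a • actM p (Quotient.out (g • c))
         (fH H ⟨(Quotient.out (g • c))⁻¹ * (g * Quotient.out c), by
            rw [← QuotientGroup.eq, QuotientGroup.out_eq', ← smul_eq_mul,
              MulAction.Quotient.mk_smul_out]⟩),
   fun H => Finsupp.mapDomain (fun c => g • c) (m.2 H))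

/-- the map `π' : M → Z/pZ`, `(x₀, x₁, x₂, y, z) ↦ π(x₀)`. -/
def πmap' (p : ℕ) (m : MC p) : ZMod p := πmap p m.1.1.1

/-- the norm element `N₃₄ = Σ_{g ∈ G₃₄} g ∈ Z[G]`. -/
def N34 (p : ℕ) : RG p := ∑ᶠ g : ↥(G34sub p), of ℤ (Gp p) (g : Gp p)

/-- the augmentation map `Z[G₁₂] → Z`. -/
def aug12 (p : ℕ) : R12 p →+* ℤ := (MonoidAlgebra.lift ℤ ℤ (G12t p) 1).toRingHom


section Generic
variable {H : Type*} [CommGroup H] {S : Type*} [CommRing S] {M : Type*} [AddCommGroup M]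
  [Module S M] (φ : H →* S)

/-- abstract scalar cocycle condition -/
def SCocyc (f : H → M) : Prop := ∀ g h : H, f (g * h) = φ g • f h + f g

theorem SCocyc.one {f : H → M} (hf : SCocyc φ f) : f 1 = 0 := by
  have h := hf 1 1
  simp only [mul_one, map_one, one_smul] at h
  exact (left_eq_add.mp h)

theorem SCocyc.pow {f : H → M} (hf : SCocyc φ f) (g : H) (n : ℕ) :
    f (g ^ n) = (∑ k ∈ Finset.range n, φ g ^ k) • f g := by
  induction n with
  | zero => simp [hf.one φ]
  | succ n ih =>
    rw [pow_succ, mul_comm, hf g (g ^ n), ih, Finset.sum_range_succ', smul_smul, add_smul]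
    simp only [pow_zero, one_smul, Finset.mul_sum]
    congr 2
    refine Finset.sum_congr rfl fun k _ => ?_
    ring

theorem SCocyc.ker_torsion {p : ℕ} (hp : 0 < p) {f : H → M} (hf : SCocyc φ f)
    (htf : ∀ m : M, p • m = 0 → m = 0) {g : H} (hφ : φ g = 1) (hg : g ^ p = 1) :
    f g = 0 := by
  have h := hf.pow φ g p
  rw [hg, hf.one φ, hφ] at h
  refine htf _ ?_
  have : (∑ k ∈ Finset.range p, (1:S) ^ k) = (p : S) := by simp
  rw [this] at h
  rw [← Nat.cast_smul_eq_nsmul S, ← h]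

theorem SCocyc.sub_cobound {f : H → M} (hf : SCocyc φ f) (a : M) :
    SCocyc φ (fun h => f h - (φ h • a - a)) := by
  intro g h
  simp only [hf g h, map_mul, smul_sub, mul_smul]
  abel

theorem SCocyc.vanish {p : ℕ} (hp : 0 < p) {f : H → M} (hf : SCocyc φ f)
    (htf : ∀ m : M, p • m = 0 → m = 0) (hp1 : ∀ h : H, h ^ p = 1)
    (h1 h2 : H) (hv1 : f h1 = 0) (hv2 : f h2 = 0)
    (hsurj : ∀ h : H, ∃ i j : ℕ, ∃ k : H, φ k = 1 ∧ h = h1 ^ i * h2 ^ j * k) :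
    ∀ h : H, f h = 0 := by
  intro h
  obtain ⟨i, j, k, hk, rfl⟩ := hsurj h
  rw [mul_assoc, hf, hf, hf.pow, hf.pow, hv1, hv2, smul_zero, smul_zero,
    hf.ker_torsion φ hp htf hk (hp1 k)]
  simp

theorem SCocyc.cobound_of_vanish {f : H → M} (a : M)
    (hv : ∀ h : H, f h - (φ h • a - a) = 0) : ∀ h : H, f h = φ h • a - a := by
  intro h; have := hv h; rw [sub_eq_zero] at this; exact this

end Generic

/-! ## basic group-ring facts -/

section Basics
variable {p : ℕ}

lemma cpt_pow_p (g : Cpt p) : g ^ p = 1 := by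
  have : g = Multiplicative.ofAdd (Multiplicative.toAdd g) := rfl
  rw [this]; exact ofAdd_pow_p p _ (zmod_p_smul p _)

lemma g12_pow_p (g : G12t p) : g ^ p = 1 := by
  have : g = Multiplicative.ofAdd (Multiplicative.toAdd g) := rfl
  rw [this]
  refine ofAdd_pow_p p _ ?_
  ext <;> simp [zmod_p_smul]

lemma gp_pow_p (g : Gp p) : g ^ p = 1 := by
  have : g = Multiplicative.ofAdd (Multiplicative.toAdd g) := rfl
  rw [this]
  refine ofAdd_pow_p p _ ?_
  ext <;> simp [zmod_p_smul]

variable (G : Type*) [Group G]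

lemma augGen_of (g : G) : augGen G (of ℤ G g) = 1 := by
  simp [augGen]

lemma augGen_single (g : G) (a : ℤ) : augGen G (MonoidAlgebra.single g a) = a := by
  have : (MonoidAlgebra.single g a : MonoidAlgebra ℤ G) = a • of ℤ G g := by
    simp [MonoidAlgebra.of_apply, MonoidAlgebra.smul_single']
  rw [this, map_zsmul, augGen_of, smul_eq_mul, mul_one]

lemma augGen_NN [CommGroup G] (g : G) : augGen G (NN p g) = p := by
  simp [NN, map_sum, map_pow, augGen_of, MonoidAlgebra.of_apply, augGen_single]

lemma tf_monalg [NeZero p] {G' : Type*} (x : MonoidAlgebra ℤ G') (h : p • x = 0) : x = 0 := by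
  ext g
  have h2 : (p • x).coeff g = 0 := by rw [h]; rfl
  rw [MonoidAlgebra.coeff_smul, Finsupp.smul_apply, nsmul_eq_mul] at h2
  have hp : (p : ℤ) ≠ 0 := by exact_mod_cast (NeZero.ne p)
  simpa [hp, NeZero.ne p] using h2

end Basics

/-! ## cyclic division lemmas -/

section Cyclic
variable {p : ℕ} [NeZero p] (hp : p.Prime)

lemma toAdd_ne_zero {e : Cpt p} (he : e ≠ 1) : Multiplicative.toAdd e ≠ 0 := by
  intro h; exact he (by simpa using congrArg Multiplicative.ofAdd h)

/-- `e^((u * e⁻¹).val) = u` in the cyclic group of prime order. -/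
lemma cyc_gen [Fact p.Prime] {e : Cpt p} (he : e ≠ 1) (u : Cpt p) :
    e ^ ((Multiplicative.toAdd u) * (Multiplicative.toAdd e)⁻¹).val = u := by
  set ε := Multiplicative.toAdd e with hε
  have hne : ε ≠ 0 := toAdd_ne_zero he
  have : e = Multiplicative.ofAdd ε := rfl
  rw [this, ← ofAdd_nsmul]
  congr 1
  rw [nsmul_eq_mul, ZMod.natCast_val, ZMod.cast_id]
  field_simp
  rfl

/-- the explicit division operator in `Z[⟨σ⟩]`. -/
def DcOp (p : ℕ) (e : Cpt p) (x : RCp p) : RCp p :=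
  x.coeff.sum fun g a => a • ∑ k ∈ Finset.range
    ((Multiplicative.toAdd g) * (Multiplicative.toAdd e)⁻¹).val, (of ℤ (Cpt p) e) ^ k

lemma cyc_div [Fact p.Prime] {e : Cpt p} (he : e ≠ 1) (x : RCp p) :
    x = (augGen (Cpt p) x) • (1 : RCp p) + (of ℤ (Cpt p) e - 1) * DcOp p e x := by
  induction x using MonoidAlgebra.induction_linear with
  | zero => simp [DcOp]
  | add f g hf hg =>
    rw [map_add, DcOp, MonoidAlgebra.coeff_add, Finsupp.sum_add_index' (fun _ => by simp) (fun _ _ _ => by rw [add_smul])]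
    rw [← DcOp, ← DcOp, mul_add, add_smul]
    conv_lhs => rw [hf, hg]
    ring
  | single g a =>
    rw [augGen_single]
    have hgeom : (of ℤ (Cpt p) e - 1) * ∑ k ∈ Finset.range
        ((Multiplicative.toAdd g) * (Multiplicative.toAdd e)⁻¹).val, (of ℤ (Cpt p) e) ^ k
        = MonoidAlgebra.single g 1 - 1 := by
      rw [mul_comm, geom_sum_mul, ← map_pow, cyc_gen he g, MonoidAlgebra.of_apply]
    have hD : DcOp p e (MonoidAlgebra.single g a) = a • ∑ k ∈ Finset.range
        ((Multiplicative.toAdd g) * (Multiplicative.toAdd e)⁻¹).val, (of ℤ (Cpt p) e) ^ k := by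
      rw [DcOp, MonoidAlgebra.coeff_single, Finsupp.sum_single_index (by simp)]
    rw [hD, mul_smul_comm, hgeom]
    simp [MonoidAlgebra.smul_single', smul_sub]

end Cyclic

/-! ## the two K-components -/

section Kcomp
variable {p : ℕ} [NeZero p] [Fact p.Prime]
variable {H : Type*} [CommGroup H]

/-- torsion-freeness of submodules of monoid algebras -/
lemma tf_sub {G' : Type*} [Monoid G'] (S : Submodule (MonoidAlgebra ℤ G') (MonoidAlgebra ℤ G'))
    (v : ↥S) (h : p • v = 0) : v = 0 := by
  refine Subtype.ext (tf_monalg (p := p) v.val ?_)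
  exact congrArg Subtype.val h

/-- the action of `Cpt p` on `A2C p` is trivial. -/
lemma A2C_triv (u : Cpt p) (v : ↥(A2C p)) : of ℤ (Cpt p) u • v = v := by
  haveI : Fact (1 < p) := ⟨(Fact.out : p.Prime).one_lt⟩
  have hc : c1g p ≠ 1 := by
    intro h
    have h2 : ((1 : ZMod p)) = 0 := by simpa [c1g] using congrArg Multiplicative.toAdd h
    exact one_ne_zero h2
  have hmem : v.val * (of ℤ (Cpt p) (c1g p) - 1) = 0 := by
    have hv2 : dcmap p v.val = 0 := LinearMap.mem_ker.mp v.2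
    rw [dcmap, LinearMap.toSpanSingleton_apply, smul_eq_mul] at hv2
    exact hv2
  have hfix : of ℤ (Cpt p) (c1g p) * v.val = v.val := by
    rw [mul_sub, mul_one, sub_eq_zero, mul_comm] at hmem
    exact hmem
  have hpow : ∀ i : ℕ, (of ℤ (Cpt p) (c1g p)) ^ i * v.val = v.val := by
    intro i
    induction i with
    | zero => simp
    | succ n ih => rw [pow_succ, mul_comm _ (of ℤ (Cpt p) (c1g p)), mul_assoc, ih, hfix]
  refine Subtype.ext ?_
  have hval : (of ℤ (Cpt p) u • v).val = of ℤ (Cpt p) u * v.val := rfl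
  rw [hval, ← cyc_gen hc u, map_pow, hpow]

/-- component `K_j` first factor: cocycles into `A2C` vanish. -/
lemma P3a (hH : ∀ h : H, h ^ p = 1) (ψ : H →* Cpt p) {f : H → ↥(A2C p)}
    (hf : SCocyc ((of ℤ (Cpt p)).comp ψ) f) : ∀ h : H, f h = 0 := by
  have hp0 : 0 < p := (Fact.out : p.Prime).pos
  have htriv : SCocyc (1 : H →* RCp p) f := by
    intro g h
    have hgh := hf g h
    rw [MonoidHom.comp_apply, A2C_triv] at hgh
    simpa using hgh
  exact SCocyc.vanish (1 : H →* RCp p) hp0 htriv (fun m => tf_sub _ m) hH 1 1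
    (htriv.one _) (htriv.one _) (fun h => ⟨0, 0, h, rfl, by simp⟩)

/-- component `K_j` second factor: cocycles into `Z[⟨σ⟩]` are coboundaries. -/
lemma P3b (hH : ∀ h : H, h ^ p = 1) (ψ : H →* Cpt p) {f : H → RCp p}
    (hf : SCocyc ((of ℤ (Cpt p)).comp ψ) f) :
    ∃ a : RCp p, ∀ h : H, f h = of ℤ (Cpt p) (ψ h) * a - a := by
  have hp0 : 0 < p := (Fact.out : p.Prime).pos
  by_cases htriv : ∀ h : H, ψ h = 1
  · refine ⟨0, ?_⟩
    have h1 : SCocyc (1 : H →* RCp p) f := by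
      intro g h
      have hgh := hf g h
      rw [MonoidHom.comp_apply, htriv g, map_one, one_smul] at hgh
      rw [hgh, MonoidHom.one_apply, one_smul]
    have hv := SCocyc.vanish (1 : H →* RCp p) hp0 h1 (fun m => tf_monalg (p := p) m) hH 1 1
      (h1.one _) (h1.one _) (fun h => ⟨0, 0, h, rfl, by simp⟩)
    intro h; rw [hv h]; simp
  · push_neg at htriv
    obtain ⟨h1, he⟩ := htriv
    set e := ψ h1 with hedef
    set x := f h1 with hxdef
    have hNx : NN p e * x = 0 := by
      have hpow := hf.pow _ h1 p
      rw [hH h1, hf.one _] at hpow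
      have hNN : (∑ k ∈ Finset.range p, ((of ℤ (Cpt p)).comp ψ) h1 ^ k) = NN p e := by
        rw [NN]
        simp only [MonoidHom.comp_apply, ← map_pow]
        exact Finset.sum_congr rfl fun k _ => by rw [map_pow, hedef, ← map_pow]
      rw [hNN] at hpow
      rw [← smul_eq_mul]
      exact hpow.symm
    have haug : augGen (Cpt p) x = 0 := by
      have h0 : (p : ℤ) * augGen (Cpt p) x = 0 := by
        have hh := congrArg (augGen (Cpt p)) hNx
        rwa [map_mul, augGen_NN, map_zero] at hh
      have hp' : (p : ℤ) ≠ 0 := by exact_mod_cast hp0.ne'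
      exact (mul_eq_zero.mp h0).resolve_left hp'
    set w := DcOp p e x with hwdef
    have hx : x = (of ℤ (Cpt p) e - 1) * w := by
      have hh := cyc_div he x
      rwa [haug, zero_smul, zero_add] at hh
    refine ⟨w, ?_⟩
    set f' := fun h => f h - (((of ℤ (Cpt p)).comp ψ) h • w - w) with hf'def
    have hf' : SCocyc ((of ℤ (Cpt p)).comp ψ) f' := hf.sub_cobound _ w
    have hv1 : f' h1 = 0 := by
      rw [hf'def]
      simp only [MonoidHom.comp_apply, ← hedef, ← hxdef, smul_eq_mul]
      rw [hx]; ring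
    have hsurj : ∀ h : H, ∃ i j : ℕ, ∃ k : H, ((of ℤ (Cpt p)).comp ψ) k = 1 ∧
        h = h1 ^ i * 1 ^ j * k := by
      intro h
      refine ⟨((Multiplicative.toAdd (ψ h)) * (Multiplicative.toAdd e)⁻¹).val, 0,
        (h1 ^ ((Multiplicative.toAdd (ψ h)) * (Multiplicative.toAdd e)⁻¹).val)⁻¹ * h, ?_, by group⟩
      rw [MonoidHom.comp_apply, map_mul, map_inv, map_pow]
      rw [← hedef, cyc_gen he (ψ h)]
      simp [MonoidAlgebra.one_def]
    have hv := SCocyc.vanish ((of ℤ (Cpt p)).comp ψ) hp0 hf'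
      (fun m => tf_monalg (p := p) m) hH h1 1 hv1 (hf'.one _) hsurj
    intro h
    have hh := hv h
    rw [hf'def] at hh
    rw [sub_eq_zero] at hh
    simpa [smul_eq_mul] using hh

end Kcomp

/-! ## coordinates in `G12t` -/

section Coords
variable {p : ℕ} [NeZero p]

open Multiplicative

lemma t1_pow (k : ℕ) : (t1 p) ^ k = ofAdd ((k : ZMod p), (0 : ZMod p)) := by
  rw [t1, ← ofAdd_nsmul]
  congr 1
  rw [Prod.smul_mk]
  simp [nsmul_eq_mul]

lemma t2_pow (k : ℕ) : (t2 p) ^ k = ofAdd ((0 : ZMod p), (k : ZMod p)) := by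
  rw [t2, ← ofAdd_nsmul]
  congr 1
  rw [Prod.smul_mk]
  simp [nsmul_eq_mul]

lemma val_coe (u : ZMod p) : ((u.val : ZMod p)) = u := by
  rw [ZMod.natCast_val, ZMod.cast_id]

lemma decomp1 (g : G12t p) :
    t1 p ^ (toAdd g).1.val * ofAdd ((0 : ZMod p), (toAdd g).2) = g := by
  rw [t1_pow]
  have : ofAdd ((((toAdd g).1.val : ZMod p)), (0:ZMod p)) * ofAdd ((0 : ZMod p), (toAdd g).2)
      = ofAdd (((((toAdd g).1.val : ZMod p)), (0:ZMod p)) + ((0 : ZMod p), (toAdd g).2)) := rfl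
  rw [this, Prod.mk_add_mk, add_zero, zero_add, val_coe]
  simp

lemma decomp2 (g : G12t p) :
    t2 p ^ (toAdd g).2.val * ofAdd ((toAdd g).1, (0 : ZMod p)) = g := by
  rw [t2_pow]
  have : ofAdd ((0:ZMod p), (((toAdd g).2.val : ZMod p))) * ofAdd ((toAdd g).1, (0 : ZMod p))
      = ofAdd (((0:ZMod p), ((((toAdd g).2.val : ZMod p)))) + ((toAdd g).1, (0 : ZMod p))) := rfl
  rw [this, Prod.mk_add_mk, add_zero, zero_add, val_coe]
  simp

lemma decomp12 (g : G12t p) :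
    t1 p ^ (toAdd g).1.val * t2 p ^ (toAdd g).2.val = g := by
  rw [t1_pow, t2_pow]
  have : (ofAdd ((((toAdd g).1.val : ZMod p)), (0:ZMod p)))
      * ofAdd ((0 : ZMod p), (((toAdd g).2.val : ZMod p)))
      = ofAdd (((((toAdd g).1.val : ZMod p)), (0:ZMod p))
          + ((0 : ZMod p), (((toAdd g).2.val : ZMod p)))) := rfl
  rw [this, Prod.mk_add_mk, add_zero, zero_add, val_coe, val_coe]
  simp

lemma t1k_inv_mul (k : ℕ) (g : G12t p) :
    ((t1 p ^ k)⁻¹ * g) = ofAdd ((toAdd g).1 - k, (toAdd g).2) := by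
  rw [t1_pow]
  have : (ofAdd (((k : ZMod p)), (0:ZMod p)))⁻¹ * g
      = ofAdd (-(((k : ZMod p)), (0:ZMod p)) + toAdd g) := rfl
  rw [this]
  congr 1
  ext
  · simp [sub_eq_neg_add]
  · simp

lemma t2k_inv_mul (k : ℕ) (g : G12t p) :
    ((t2 p ^ k)⁻¹ * g) = ofAdd ((toAdd g).1, (toAdd g).2 - k) := by
  rw [t2_pow]
  have : (ofAdd ((0:ZMod p), ((k : ZMod p))))⁻¹ * g
      = ofAdd (-((0:ZMod p), ((k : ZMod p))) + toAdd g) := rfl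
  rw [this]
  congr 1
  ext
  · simp
  · simp [sub_eq_neg_add]

lemma cast_ne_zero_of_range {k : ℕ} (hk : k < p) (h0 : k ≠ 0) : ((k : ZMod p)) ≠ 0 := by
  intro h
  have := ZMod.val_cast_of_lt hk
  rw [h, ZMod.val_zero] at this
  exact h0 this.symm

lemma sub_cast_eq_zero_iff {u : ZMod p} {k : ℕ} (hk : k < p) : u - k = 0 ↔ k = u.val := by
  constructor
  · intro h
    have : (k : ZMod p) = u := by linear_combination -h
    rw [← this, ZMod.val_cast_of_lt hk]
  · intro h
    rw [h, val_coe, sub_self]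

end Coords

/-! ## division operators on `R12` -/

section Ops
variable {p : ℕ} [NeZero p]

open Multiplicative Finsupp

/-- generic coefficient-wise operator -/
noncomputable def opOf (c : G12t p → R12 p) (x : R12 p) : R12 p :=
  x.coeff.sum fun g a => a • c g

lemma opOf_add (c : G12t p → R12 p) (x y : R12 p) :
    opOf c (x + y) = opOf c x + opOf c y := by
  unfold opOf
  rw [MonoidAlgebra.coeff_add]
  exact Finsupp.sum_add_index' (fun _ => by simp) (fun _ _ _ => add_smul _ _ _)

lemma opOf_single (c : G12t p → R12 p) (g : G12t p) (a : ℤ) :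
    opOf c (MonoidAlgebra.single g a) = a • c g := by
  unfold opOf
  rw [MonoidAlgebra.coeff_single]
  exact Finsupp.sum_single_index (by simp)

lemma opOf_zero (c : G12t p → R12 p) : opOf c 0 = 0 := by
  unfold opOf; simp

/-- division by `σ₁ - 1` -/
noncomputable def opD1 : R12 p → R12 p :=
  opOf fun g => of ℤ (G12t p) (ofAdd ((0:ZMod p), (toAdd g).2))
    * ∑ k ∈ Finset.range ((toAdd g).1.val), of ℤ (G12t p) (t1 p) ^ k

/-- collapse of the first coordinate -/
noncomputable def opC1 : R12 p → R12 p :=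
  opOf fun g => of ℤ (G12t p) (ofAdd ((0:ZMod p), (toAdd g).2))

/-- division by `σ₂ - 1` -/
noncomputable def opD2 : R12 p → R12 p :=
  opOf fun g => of ℤ (G12t p) (ofAdd ((toAdd g).1, (0:ZMod p)))
    * ∑ k ∈ Finset.range ((toAdd g).2.val), of ℤ (G12t p) (t2 p) ^ k

/-- collapse of the second coordinate -/
noncomputable def opC2 : R12 p → R12 p :=
  opOf fun g => of ℤ (G12t p) (ofAdd ((toAdd g).1, (0:ZMod p)))

/-- first augmentation-division operator -/
noncomputable def opA1 : R12 p → R12 p :=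
  opOf fun g => ∑ k ∈ Finset.range ((toAdd g).1.val), of ℤ (G12t p) (t1 p) ^ k

/-- second augmentation-division operator -/
noncomputable def opA2 : R12 p → R12 p :=
  opOf fun g => of ℤ (G12t p) (t1 p) ^ ((toAdd g).1.val)
    * ∑ k ∈ Finset.range ((toAdd g).2.val), of ℤ (G12t p) (t2 p) ^ k

lemma single_eq_smul_of (g : G12t p) (a : ℤ) :
    (MonoidAlgebra.single g a : R12 p) = a • of ℤ (G12t p) g := by
  simp [MonoidAlgebra.of_apply, MonoidAlgebra.smul_single']

lemma fsingle_eq_smul_of (g : G12t p) (a : ℤ) :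
    (MonoidAlgebra.single g a : R12 p) = a • of ℤ (G12t p) g := single_eq_smul_of g a

/-- `NN t * of t ^ m = NN t` -/
lemma NN_mul_pow {G : Type*} [CommGroup G] (t : G) (ht : t ^ p = 1) (m : ℕ) :
    NN p t * of ℤ G t ^ m = NN p t := by
  induction m with
  | zero => simp
  | succ n ih =>
    rw [pow_succ, ← mul_assoc, ih]
    have h0 := NN_mul p t ht
    rw [mul_sub, mul_one, sub_eq_zero] at h0
    exact h0

/-- coefficient formula for multiplication by the norm -/
lemma NN_mul_apply {G : Type*} [CommGroup G] (t : G) (y : MonoidAlgebra ℤ G) (g : G) :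
    (NN p t * y).coeff g = ∑ k ∈ Finset.range p, y.coeff ((t ^ k)⁻¹ * g) := by
  rw [NN, Finset.sum_mul, MonoidAlgebra.coeff_sum, Finsupp.finset_sum_apply]
  refine Finset.sum_congr rfl fun k _ => ?_
  rw [← map_pow, MonoidAlgebra.of_apply, MonoidAlgebra.coeff_single_mul_apply, one_mul]

lemma pow_mul_apply {G : Type*} [CommGroup G] (t : G) (k : ℕ) (y : MonoidAlgebra ℤ G) (g : G) :
    (of ℤ G t ^ k * y).coeff g = y.coeff ((t ^ k)⁻¹ * g) := by
  rw [← map_pow, MonoidAlgebra.of_apply, MonoidAlgebra.coeff_single_mul_apply, one_mul]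

/-- `(σ₁-1) * opD1 x = x - opC1 x` -/
lemma div1_eq (x : R12 p) :
    (of ℤ (G12t p) (t1 p) - 1) * opD1 x = x - opC1 x := by
  induction x using MonoidAlgebra.induction_linear with
  | zero => rw [opD1, opC1, opOf_zero, opOf_zero]; simp
  | add f g hf hg =>
    rw [opD1, opC1, opOf_add, opOf_add, ← opD1, ← opC1, mul_add, hf, hg]; ring
  | single g a =>
    rw [opD1, opC1, opOf_single, opOf_single, mul_smul_comm, mul_left_comm,
      show (of ℤ (G12t p) (t1 p) - 1) * ∑ k ∈ Finset.range ((Multiplicative.toAdd g).1.val),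
          of ℤ (G12t p) (t1 p) ^ k
        = of ℤ (G12t p) (t1 p) ^ ((Multiplicative.toAdd g).1.val) - 1 from by
          rw [mul_comm, geom_sum_mul],
      mul_sub, mul_one, ← map_pow, ← map_mul,
      mul_comm (Multiplicative.ofAdd ((0:ZMod p), (Multiplicative.toAdd g).2))
        (t1 p ^ (Multiplicative.toAdd g).1.val), decomp1, smul_sub, fsingle_eq_smul_of]

/-- `(σ₂-1) * opD2 x = x - opC2 x` -/
lemma div2_eq (x : R12 p) :
    (of ℤ (G12t p) (t2 p) - 1) * opD2 x = x - opC2 x := by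
  induction x using MonoidAlgebra.induction_linear with
  | zero => rw [opD2, opC2, opOf_zero, opOf_zero]; simp
  | add f g hf hg =>
    rw [opD2, opC2, opOf_add, opOf_add, ← opD2, ← opC2, mul_add, hf, hg]; ring
  | single g a =>
    rw [opD2, opC2, opOf_single, opOf_single, mul_smul_comm, mul_left_comm,
      show (of ℤ (G12t p) (t2 p) - 1) * ∑ k ∈ Finset.range ((Multiplicative.toAdd g).2.val),
          of ℤ (G12t p) (t2 p) ^ k
        = of ℤ (G12t p) (t2 p) ^ ((Multiplicative.toAdd g).2.val) - 1 from by
          rw [mul_comm, geom_sum_mul],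
      mul_sub, mul_one, ← map_pow, ← map_mul,
      mul_comm (Multiplicative.ofAdd ((Multiplicative.toAdd g).1, (0:ZMod p)))
        (t2 p ^ (Multiplicative.toAdd g).2.val), decomp2, smul_sub, fsingle_eq_smul_of]

/-- `N₁ * x = N₁ * opC1 x` -/
lemma NN1_opC1 (x : R12 p) :
    NN p (t1 p) * x = NN p (t1 p) * opC1 x := by
  induction x using MonoidAlgebra.induction_linear with
  | zero => rw [opC1, opOf_zero]
  | add f g hf hg => rw [opC1, opOf_add, ← opC1, mul_add, mul_add, hf, hg]
  | single g a =>
    rw [opC1, opOf_single, fsingle_eq_smul_of, mul_smul_comm, mul_smul_comm]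
    congr 1
    conv_lhs => rw [← decomp1 g]
    rw [map_mul, ← mul_assoc, map_pow, NN_mul_pow (t1 p) (g12_pow_p _)]

/-- `N₂ * x = N₂ * opC2 x` -/
lemma NN2_opC2 (x : R12 p) :
    NN p (t2 p) * x = NN p (t2 p) * opC2 x := by
  induction x using MonoidAlgebra.induction_linear with
  | zero => rw [opC2, opOf_zero]
  | add f g hf hg => rw [opC2, opOf_add, ← opC2, mul_add, mul_add, hf, hg]
  | single g a =>
    rw [opC2, opOf_single, fsingle_eq_smul_of, mul_smul_comm, mul_smul_comm]
    congr 1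
    conv_lhs => rw [← decomp2 g]
    rw [map_mul, ← mul_assoc, map_pow, NN_mul_pow (t2 p) (g12_pow_p _)]

end Ops

/-! ## coefficient lemmas on `R12` -/

section Coeffs
variable {p : ℕ} [NeZero p]

open Multiplicative Finsupp

lemma opC1_apply_ne (x : R12 p) (g : G12t p) (hg : (toAdd g).1 ≠ 0) : (opC1 x).coeff g = 0 := by
  rw [opC1, opOf, MonoidAlgebra.coeff_finsuppSum, Finsupp.sum_apply, Finsupp.sum]
  refine Finset.sum_eq_zero fun g' _ => ?_
  rw [MonoidAlgebra.coeff_smul, Finsupp.smul_apply, MonoidAlgebra.of_apply, MonoidAlgebra.coeff_single, Finsupp.single_apply]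
  rw [if_neg, smul_zero]
  intro h
  apply hg
  rw [← h]
  rfl

lemma opC2_apply_ne (x : R12 p) (g : G12t p) (hg : (toAdd g).2 ≠ 0) : (opC2 x).coeff g = 0 := by
  rw [opC2, opOf, MonoidAlgebra.coeff_finsuppSum, Finsupp.sum_apply, Finsupp.sum]
  refine Finset.sum_eq_zero fun g' _ => ?_
  rw [MonoidAlgebra.coeff_smul, Finsupp.smul_apply, MonoidAlgebra.of_apply, MonoidAlgebra.coeff_single, Finsupp.single_apply]
  rw [if_neg, smul_zero]
  intro h
  apply hg
  rw [← h]
  rfl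

/-- a column-supported element killed by `N₁` is zero -/
lemma supp1_norm_inj (y : R12 p) (hs : ∀ g : G12t p, (toAdd g).1 ≠ 0 → y.coeff g = 0)
    (hN : NN p (t1 p) * y = 0) : y = 0 := by
  have hp0 : 0 < p := Nat.pos_of_ne_zero (NeZero.ne p)
  ext g
  by_cases hg : (toAdd g).1 = 0
  · have h0 : (NN p (t1 p) * y).coeff g = 0 := by rw [hN]; rfl
    rw [NN_mul_apply] at h0
    rw [Finset.sum_eq_single_of_mem 0 (Finset.mem_range.mpr hp0)] at h0
    · rw [pow_zero, inv_one, one_mul] at h0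
      rw [h0]; rfl
    · intro k hk hk0
      apply hs
      rw [t1k_inv_mul, toAdd_ofAdd, hg, zero_sub]
      simp only [ne_eq, neg_eq_zero]
      exact cast_ne_zero_of_range (Finset.mem_range.mp hk) hk0
  · rw [hs g hg]; rfl

lemma supp2_norm_inj (y : R12 p) (hs : ∀ g : G12t p, (toAdd g).2 ≠ 0 → y.coeff g = 0)
    (hN : NN p (t2 p) * y = 0) : y = 0 := by
  have hp0 : 0 < p := Nat.pos_of_ne_zero (NeZero.ne p)
  ext g
  by_cases hg : (toAdd g).2 = 0
  · have h0 : (NN p (t2 p) * y).coeff g = 0 := by rw [hN]; rfl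
    rw [NN_mul_apply] at h0
    rw [Finset.sum_eq_single_of_mem 0 (Finset.mem_range.mpr hp0)] at h0
    · rw [pow_zero, inv_one, one_mul] at h0
      rw [h0]; rfl
    · intro k hk hk0
      apply hs
      rw [t2k_inv_mul, toAdd_ofAdd, hg, zero_sub]
      simp only [ne_eq, neg_eq_zero]
      exact cast_ne_zero_of_range (Finset.mem_range.mp hk) hk0
  · rw [hs g hg]; rfl

lemma opC1_zero (x : R12 p) (hN : NN p (t1 p) * x = 0) : opC1 x = 0 := by
  refine supp1_norm_inj _ (fun g hg => opC1_apply_ne x g hg) ?_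
  rw [← NN1_opC1, hN]

lemma opC2_zero (x : R12 p) (hN : NN p (t2 p) * x = 0) : opC2 x = 0 := by
  refine supp2_norm_inj _ (fun g hg => opC2_apply_ne x g hg) ?_
  rw [← NN2_opC2, hN]

/-- division lemma for `σ₁` -/
lemma div1 (x : R12 p) (hN : NN p (t1 p) * x = 0) :
    (of ℤ (G12t p) (t1 p) - 1) * opD1 x = x := by
  rw [div1_eq, opC1_zero x hN, sub_zero]

lemma div2 (x : R12 p) (hN : NN p (t2 p) * x = 0) :
    (of ℤ (G12t p) (t2 p) - 1) * opD2 x = x := by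
  rw [div2_eq, opC2_zero x hN, sub_zero]

/-- constancy along the first coordinate -/
lemma const1 (z : R12 p) (hz : of ℤ (G12t p) (t1 p) * z = z) (g : G12t p) :
    z.coeff g = z.coeff (ofAdd ((0 : ZMod p), (toAdd g).2)) := by
  have hpow : ∀ j : ℕ, (of ℤ (G12t p) (t1 p)) ^ j * z = z := by
    intro j
    induction j with
    | zero => simp
    | succ n ih => rw [pow_succ, mul_comm _ (of ℤ (G12t p) (t1 p)), mul_assoc, ih, hz]
  have h1 : ((of ℤ (G12t p) (t1 p)) ^ ((toAdd g).1.val) * z).coeff g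
      = z.coeff ((t1 p ^ ((toAdd g).1.val))⁻¹ * g) := pow_mul_apply _ _ _ _
  rw [hpow] at h1
  rw [h1, t1k_inv_mul, val_coe, sub_self]

lemma const2 (z : R12 p) (hz : of ℤ (G12t p) (t2 p) * z = z) (g : G12t p) :
    z.coeff g = z.coeff (ofAdd ((toAdd g).1, (0 : ZMod p))) := by
  have hpow : ∀ j : ℕ, (of ℤ (G12t p) (t2 p)) ^ j * z = z := by
    intro j
    induction j with
    | zero => simp
    | succ n ih => rw [pow_succ, mul_comm _ (of ℤ (G12t p) (t2 p)), mul_assoc, ih, hz]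
  have h1 : ((of ℤ (G12t p) (t2 p)) ^ ((toAdd g).2.val) * z).coeff g
      = z.coeff ((t2 p ^ ((toAdd g).2.val))⁻¹ * g) := pow_mul_apply _ _ _ _
  rw [hpow] at h1
  rw [h1, t2k_inv_mul, val_coe, sub_self]

open scoped Classical in
/-- an element fixed by `σ₁` is a norm multiple -/
lemma norm1_of_fix (z : R12 p) (hz : of ℤ (G12t p) (t1 p) * z = z) :
    ∃ r : R12 p, z = NN p (t1 p) * r := by
  refine ⟨MonoidAlgebra.ofCoeff (Finsupp.filter (fun g : G12t p => (toAdd g).1 = 0) z.coeff), ?_⟩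
  ext g
  rw [NN_mul_apply]
  rw [Finset.sum_eq_single_of_mem ((toAdd g).1.val)
    (Finset.mem_range.mpr (ZMod.val_lt _))]
  · rw [t1k_inv_mul, MonoidAlgebra.coeff_ofCoeff, Finsupp.filter_apply, if_pos (by rw [val_coe, sub_self]; rfl)]
    rw [val_coe, sub_self]
    exact const1 z hz g
  · intro k hk hk0
    rw [t1k_inv_mul, MonoidAlgebra.coeff_ofCoeff, Finsupp.filter_apply, if_neg, ]
    intro hc
    rw [toAdd_ofAdd] at hc
    exact hk0 ((sub_cast_eq_zero_iff (Finset.mem_range.mp hk)).mp hc)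

/-- augmentation as coefficient sum -/
lemma aug_eq_sum {G : Type*} [Group G] (x : MonoidAlgebra ℤ G) :
    augGen G x = x.coeff.sum fun _ a => a := by
  induction x using MonoidAlgebra.induction_linear with
  | zero => simp
  | add f g hf hg =>
    rw [map_add, hf, hg, MonoidAlgebra.coeff_add, Finsupp.sum_add_index' (fun _ => rfl) (fun _ _ _ => rfl)]
  | single g a =>
    rw [MonoidAlgebra.coeff_single, Finsupp.sum_single_index rfl]
    exact augGen_single G g a

/-- an element fixed by `σ₁` and `σ₂` with zero augmentation is zero -/
lemma fix_both (z : R12 p) (h1 : of ℤ (G12t p) (t1 p) * z = z)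
    (h2 : of ℤ (G12t p) (t2 p) * z = z) (haug : augGen (G12t p) z = 0) : z = 0 := by
  have hconst : ∀ g : G12t p, z.coeff g = z.coeff 1 := by
    intro g
    rw [const1 z h1 g]
    have := const2 z h2 (ofAdd ((0 : ZMod p), (toAdd g).2))
    rw [this]
    rfl
  by_cases hz1 : z.coeff 1 = 0
  · ext g; rw [hconst g, hz1]; rfl
  · exfalso
    have hsupp : z.coeff.support = Finset.univ := by
      ext g
      simp only [Finsupp.mem_support_iff, Finset.mem_univ, iff_true]
      rw [hconst g]; exact hz1
    have hcard : (Finset.univ : Finset (G12t p)).card = p * p := by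
      rw [Finset.card_univ]
      have hcg : Fintype.card (G12t p) = Fintype.card (ZMod p × ZMod p) :=
        Fintype.card_congr Multiplicative.toAdd
      rw [hcg, Fintype.card_prod, ZMod.card]
    have haug2 : augGen (G12t p) z = (p * p : ℕ) • z.coeff 1 := by
      rw [aug_eq_sum, Finsupp.sum, hsupp]
      rw [Finset.sum_congr rfl (fun g _ => hconst g), Finset.sum_const, hcard]
    rw [haug2] at haug
    have hp' : ((p * p : ℕ) : ℤ) ≠ 0 := by
      have := NeZero.ne p
      positivity
    apply hz1
    rw [nsmul_eq_mul] at haug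
    exact (mul_eq_zero.mp haug).resolve_left hp'

/-- decomposition of augmentation-zero elements -/
lemma Idecomp (r : R12 p) (haug : augGen (G12t p) r = 0) :
    r = opA1 r * (of ℤ (G12t p) (t1 p) - 1) + opA2 r * (of ℤ (G12t p) (t2 p) - 1) := by
  have key : ∀ x : R12 p, x = (augGen (G12t p) x) • (1 : R12 p)
      + opA1 x * (of ℤ (G12t p) (t1 p) - 1) + opA2 x * (of ℤ (G12t p) (t2 p) - 1) := by
    intro x
    induction x using MonoidAlgebra.induction_linear with
    | zero => rw [opA1, opA2, opOf_zero, opOf_zero]; simp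
    | add f g hf hg =>
      rw [map_add, opA1, opA2, opOf_add, opOf_add, ← opA1, ← opA2, add_smul,
        add_mul, add_mul]
      conv_lhs => rw [hf, hg]
      ring
    | single g a =>
      rw [augGen_single, opA1, opA2, opOf_single, opOf_single, smul_mul_assoc,
        smul_mul_assoc, geom_sum_mul, mul_assoc, geom_sum_mul, mul_sub, mul_one,
        ← map_pow, ← map_pow, ← map_mul, decomp12, fsingle_eq_smul_of, smul_sub, smul_sub]
      abel
  have := key r
  rwa [haug, zero_smul, zero_add] at this

end Coeffs

/-! ## transport along automorphisms -/

section Transport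
variable {p : ℕ} [NeZero p] [Fact p.Prime]

open Multiplicative

lemma exists_autom {t : G12t p} (ht : t ≠ 1) :
    ∃ e : G12t p ≃* G12t p, e (t1 p) = t := by
  set a := (toAdd t).1 with hadef
  set b := (toAdd t).2 with hbdef
  have htadd : t = ofAdd (a, b) := rfl
  by_cases ha : a ≠ 0
  · refine ⟨AddEquiv.toMultiplicative
      { toFun := fun v => (a * v.1, b * v.1 + v.2),
        invFun := fun w => (a⁻¹ * w.1, w.2 - b * (a⁻¹ * w.1)),
        left_inv := fun v => by
          dsimp only
          have h : a⁻¹ * (a * v.1) = v.1 := by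
            rw [← mul_assoc, inv_mul_cancel₀ ha, one_mul]
          rw [Prod.mk.injEq]
          exact ⟨h, by rw [h]; ring⟩,
        right_inv := fun w => by
          dsimp only
          have h : a * (a⁻¹ * w.1) = w.1 := by
            rw [← mul_assoc, mul_inv_cancel₀ ha, one_mul]
          rw [Prod.mk.injEq]
          exact ⟨h, by ring⟩,
        map_add' := fun v w => by ext <;> simp only [Prod.fst_add, Prod.snd_add] <;> ring }, ?_⟩
    show ofAdd (a * 1, b * 1 + 0) = t
    rw [htadd]; norm_num
  · push_neg at ha
    have hb : b ≠ 0 := by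
      intro hb
      apply ht
      rw [htadd, ha, hb]
      rfl
    refine ⟨AddEquiv.toMultiplicative
      { toFun := fun v => (v.2, b * v.1),
        invFun := fun w => (b⁻¹ * w.2, w.1),
        left_inv := fun v => by
          dsimp only
          have h : b⁻¹ * (b * v.1) = v.1 := by
            rw [← mul_assoc, inv_mul_cancel₀ hb, one_mul]
          rw [Prod.mk.injEq]
          refine ⟨h, rfl⟩,
        right_inv := fun w => by
          dsimp only
          have h : b * (b⁻¹ * w.2) = w.2 := by
            rw [← mul_assoc, mul_inv_cancel₀ hb, one_mul]
          rw [Prod.mk.injEq]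
          refine ⟨rfl, h⟩,
        map_add' := fun v w => by ext <;> simp only [Prod.fst_add, Prod.snd_add] <;> ring }, ?_⟩
    show ofAdd ((0 : ZMod p), b * 1) = t
    rw [htadd, ha]; norm_num

lemma domCongr_of (e : G12t p ≃* G12t p) (g : G12t p) :
    (MonoidAlgebra.domCongr ℤ ℤ e) (of ℤ (G12t p) g) = of ℤ (G12t p) (e g) := by
  simp only [MonoidAlgebra.of_apply, MonoidAlgebra.domCongr_single]

lemma domCongr_NN (e : G12t p ≃* G12t p) (u : G12t p) :
    (MonoidAlgebra.domCongr ℤ ℤ e) (NN p u) = NN p (e u) := by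
  rw [NN, NN, map_sum]
  refine Finset.sum_congr rfl fun k _ => ?_
  rw [map_pow, domCongr_of]

lemma domCongr_aug (e : G12t p ≃* G12t p) (x : R12 p) :
    augGen (G12t p) ((MonoidAlgebra.domCongr ℤ ℤ e) x) = augGen (G12t p) x := by
  induction x using MonoidAlgebra.induction_linear with
  | zero => simp
  | add f g hf hg =>
    rw [map_add, map_add, hf, hg]
    exact (map_add _ f g).symm
  | single g a =>
    rw [MonoidAlgebra.domCongr_single, augGen_single, augGen_single]

/-- general `t`: elements killed by the norm are divisible by `t - 1` -/
lemma geni {t : G12t p} (ht : t ≠ 1) (x : R12 p) (hN : NN p t * x = 0) :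
    ∃ w : R12 p, x = (of ℤ (G12t p) t - 1) * w := by
  obtain ⟨e, he⟩ := exists_autom ht
  set EE := MonoidAlgebra.domCongr ℤ ℤ e with hEE
  set x' := EE.symm x with hx'
  have hN' : NN p (t1 p) * x' = 0 := by
    apply EE.injective
    rw [map_mul, map_zero, domCongr_NN, he, hx', AlgEquiv.apply_symm_apply]
    exact hN
  refine ⟨EE (opD1 x'), ?_⟩
  have hx : x = EE ((of ℤ (G12t p) (t1 p) - 1) * opD1 x') := by
    rw [div1 x' hN', hx', AlgEquiv.apply_symm_apply]
  rw [hx, map_mul, map_sub, map_one, domCongr_of, he]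

/-- general `t`: elements fixed by `t` are norm multiples -/
lemma genii {t : G12t p} (ht : t ≠ 1) (z : R12 p)
    (hz : (of ℤ (G12t p) t - 1) * z = 0) :
    ∃ r : R12 p, z = NN p t * r := by
  obtain ⟨e, he⟩ := exists_autom ht
  set EE := MonoidAlgebra.domCongr ℤ ℤ e with hEE
  set z' := EE.symm z with hz'
  have hfix' : of ℤ (G12t p) (t1 p) * z' = z' := by
    apply EE.injective
    rw [map_mul, domCongr_of, he, hz', AlgEquiv.apply_symm_apply]
    have h2 := hz
    rw [sub_mul, one_mul, sub_eq_zero] at h2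
    exact h2
  obtain ⟨r, hr⟩ := norm1_of_fix z' hfix'
  refine ⟨EE r, ?_⟩
  have hx : z = EE (NN p (t1 p) * r) := by
    rw [← hr, hz', AlgEquiv.apply_symm_apply]
  rw [hx, map_mul, domCongr_NN, he]

end Transport

/-! ## the two key construction lemmas -/

section Cases
variable {p : ℕ} [NeZero p] [Fact p.Prime]

open Multiplicative

lemma opD2_add (x y : R12 p) : opD2 (x + y) = opD2 x + opD2 y := opOf_add _ _ _

/-- `opD2` commutes with multiplication by `σ₁` -/
lemma opD2_comm (x : R12 p) :
    opD2 (of ℤ (G12t p) (t1 p) * x) = of ℤ (G12t p) (t1 p) * opD2 x := by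
  induction x using MonoidAlgebra.induction_linear with
  | zero => rw [mul_zero, opD2, opOf_zero, mul_zero]
  | add f g hf hg =>
    rw [mul_add, opD2_add, hf, hg, opD2_add, mul_add]
  | single g a =>
    have h2 : (toAdd (t1 p * g)).2 = (toAdd g).2 := by
      rw [toAdd_mul, Prod.snd_add]
      exact zero_add _
    have h3 : (ofAdd ((toAdd (t1 p * g)).1, (0:ZMod p)) : G12t p)
        = t1 p * ofAdd ((toAdd g).1, (0:ZMod p)) := by
      rw [toAdd_mul]
      have ht1 : t1 p = ofAdd ((1:ZMod p),(0:ZMod p)) := rfl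
      rw [ht1, ← ofAdd_add]
      congr 1
      ext
      · rfl
      · simp
    rw [MonoidAlgebra.of_apply, MonoidAlgebra.single_mul_single, one_mul, opD2,
      opOf_single, opOf_single, ← MonoidAlgebra.of_apply ℤ (G12t p), mul_smul_comm]
    congr 1
    rw [h2, h3, map_mul, mul_assoc]

/-- Case B construction: killing the value on one generator -/
lemma caseB {t : G12t p} (ht : t ≠ 1) (x1 x2 : R12 p)
    (hd : x1 * (of ℤ (G12t p) (t1 p) - 1) + x2 * (of ℤ (G12t p) (t2 p) - 1) = 0)
    (hN1 : NN p t * x1 = 0) (hN2 : NN p t * x2 = 0) :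
    ∃ a1 a2 : R12 p,
      a1 * (of ℤ (G12t p) (t1 p) - 1) + a2 * (of ℤ (G12t p) (t2 p) - 1) = 0 ∧
      (of ℤ (G12t p) t - 1) * a1 = x1 ∧ (of ℤ (G12t p) t - 1) * a2 = x2 := by
  have hp0 : 0 < p := Nat.pos_of_ne_zero (NeZero.ne p)
  obtain ⟨w1, hw1⟩ := geni ht x1 hN1
  obtain ⟨w2, hw2⟩ := geni ht x2 hN2
  set z := w1 * (of ℤ (G12t p) (t1 p) - 1) + w2 * (of ℤ (G12t p) (t2 p) - 1) with hzdef
  have hzfix : (of ℤ (G12t p) t - 1) * z = 0 := by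
    rw [hzdef, mul_add, ← mul_assoc, ← mul_assoc, ← hw1, ← hw2, hd]
  obtain ⟨r, hr⟩ := genii ht z hzfix
  have haugz : augGen (G12t p) z = 0 := by
    rw [hzdef]
    simp [map_mul, augGen_of, augGen_single]
  have haugr : augGen (G12t p) r = 0 := by
    have h0 : (p : ℤ) * augGen (G12t p) r = 0 := by
      have hh := congrArg (augGen (G12t p)) hr
      rwa [map_mul, augGen_NN, haugz, eq_comm] at hh
    have hp' : (p : ℤ) ≠ 0 := by exact_mod_cast hp0.ne'
    exact (mul_eq_zero.mp h0).resolve_left hp'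
  have hrdec := Idecomp r haugr
  have hNT : NN p t * (of ℤ (G12t p) t - 1) = 0 := NN_mul p t (g12_pow_p t)
  refine ⟨w1 - NN p t * opA1 r, w2 - NN p t * opA2 r, ?_, ?_, ?_⟩
  · rw [sub_mul, sub_mul]
    have : NN p t * opA1 r * (of ℤ (G12t p) (t1 p) - 1)
        + NN p t * opA2 r * (of ℤ (G12t p) (t2 p) - 1) = NN p t * r := by
      conv_rhs => rw [hrdec]
      ring
    rw [← hzdef] at *
    calc w1 * (of ℤ (G12t p) (t1 p) - 1) - NN p t * opA1 r * (of ℤ (G12t p) (t1 p) - 1)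
        + (w2 * (of ℤ (G12t p) (t2 p) - 1) - NN p t * opA2 r * (of ℤ (G12t p) (t2 p) - 1))
        = z - (NN p t * opA1 r * (of ℤ (G12t p) (t1 p) - 1)
            + NN p t * opA2 r * (of ℤ (G12t p) (t2 p) - 1)) := by rw [hzdef]; ring
      _ = z - NN p t * r := by rw [this]
      _ = 0 := by rw [hr, sub_self]
  · rw [mul_sub, ← hw1]
    have : (of ℤ (G12t p) t - 1) * (NN p t * opA1 r) = 0 := by
      rw [← mul_assoc, mul_comm (of ℤ (G12t p) t - 1), hNT, zero_mul]
    rw [this, sub_zero]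
  · rw [mul_sub, ← hw2]
    have : (of ℤ (G12t p) t - 1) * (NN p t * opA2 r) = 0 := by
      rw [← mul_assoc, mul_comm (of ℤ (G12t p) t - 1), hNT, zero_mul]
    rw [this, sub_zero]

/-- Case C construction: killing the value on the second generator while
preserving vanishing on the first -/
lemma caseC (x1 x2 : R12 p)
    (hd : x1 * (of ℤ (G12t p) (t1 p) - 1) + x2 * (of ℤ (G12t p) (t2 p) - 1) = 0)
    (hfix1 : of ℤ (G12t p) (t1 p) * x1 = x1) (hfix2 : of ℤ (G12t p) (t1 p) * x2 = x2)
    (hN1 : NN p (t2 p) * x1 = 0) (hN2 : NN p (t2 p) * x2 = 0) :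
    ∃ a1 a2 : R12 p,
      a1 * (of ℤ (G12t p) (t1 p) - 1) + a2 * (of ℤ (G12t p) (t2 p) - 1) = 0 ∧
      (of ℤ (G12t p) (t1 p) - 1) * a1 = 0 ∧ (of ℤ (G12t p) (t1 p) - 1) * a2 = 0 ∧
      (of ℤ (G12t p) (t2 p) - 1) * a1 = x1 ∧ (of ℤ (G12t p) (t2 p) - 1) * a2 = x2 := by
  refine ⟨opD2 x1, opD2 x2, ?_, ?_, ?_, div2 x1 hN1, div2 x2 hN2⟩
  · set z := opD2 x1 * (of ℤ (G12t p) (t1 p) - 1) + opD2 x2 * (of ℤ (G12t p) (t2 p) - 1)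
      with hzdef
    have hfa1 : of ℤ (G12t p) (t1 p) * opD2 x1 = opD2 x1 := by
      rw [← opD2_comm, hfix1]
    have hfa2 : of ℤ (G12t p) (t1 p) * opD2 x2 = opD2 x2 := by
      rw [← opD2_comm, hfix2]
    have hz1 : of ℤ (G12t p) (t1 p) * z = z := by
      rw [hzdef, mul_add, ← mul_assoc, ← mul_assoc, hfa1, hfa2]
    have hz2 : of ℤ (G12t p) (t2 p) * z = z := by
      have hsub : (of ℤ (G12t p) (t2 p) - 1) * z = 0 := by
        have e1 : (of ℤ (G12t p) (t2 p) - 1) * opD2 x1 = x1 := div2 x1 hN1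
        have e2 : (of ℤ (G12t p) (t2 p) - 1) * opD2 x2 = x2 := div2 x2 hN2
        calc (of ℤ (G12t p) (t2 p) - 1) * z
            = ((of ℤ (G12t p) (t2 p) - 1) * opD2 x1) * (of ℤ (G12t p) (t1 p) - 1)
              + ((of ℤ (G12t p) (t2 p) - 1) * opD2 x2) * (of ℤ (G12t p) (t2 p) - 1) := by
              rw [hzdef]; ring
          _ = x1 * (of ℤ (G12t p) (t1 p) - 1) + x2 * (of ℤ (G12t p) (t2 p) - 1) := by
              rw [e1, e2]
          _ = 0 := hd
      rw [sub_mul, one_mul, sub_eq_zero] at hsub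
      exact hsub
    have haugz : augGen (G12t p) z = 0 := by
      rw [hzdef]
      simp [map_mul, augGen_of, augGen_single]
    exact fix_both z hz1 hz2 haugz
  · rw [sub_mul, one_mul, ← opD2_comm, hfix1, sub_self]
  · rw [sub_mul, one_mul, ← opD2_comm, hfix2, sub_self]

end Cases

/-! ## the `A₂(G₁₂)` component -/

section Comp1
variable {p : ℕ} [NeZero p] [Fact p.Prime]

open Multiplicative

lemma d12map_eq (x : R12 p × R12 p) :
    d12map p x = x.1 * (of ℤ (G12t p) (t1 p) - 1) + x.2 * (of ℤ (G12t p) (t2 p) - 1) := by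
  simp [d12map, LinearMap.toSpanSingleton_apply, smul_eq_mul]

lemma tf_A2 (v : ↥(A2G12 p)) (h : p • v = 0) : v = 0 := by
  have hval : p • (v : R12 p × R12 p) = 0 := congrArg Subtype.val h
  refine Subtype.ext (Prod.ext ?_ ?_)
  · exact tf_monalg (p := p) _ (congrArg Prod.fst hval)
  · exact tf_monalg (p := p) _ (congrArg Prod.snd hval)

lemma t1_ne_one : (t1 p) ≠ 1 := by
  haveI : Fact (1 < p) := ⟨(Fact.out : p.Prime).one_lt⟩
  intro h
  have h2 : ((1 : ZMod p), (0 : ZMod p)).1 = ((0 : ZMod p), (0 : ZMod p)).1 :=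
    congrArg (fun u : G12t p => (toAdd u).1) h
  exact one_ne_zero h2

lemma pow_coords (u : G12t p) (i : ℕ) :
    u ^ i = ofAdd (((i : ZMod p)) * (toAdd u).1, ((i : ZMod p)) * (toAdd u).2) := by
  have hu : u = ofAdd (toAdd u) := rfl
  rw [hu, ← ofAdd_nsmul]
  congr 1
  rw [Prod.smul_def]
  ext
  · simp [nsmul_eq_mul]
  · simp [nsmul_eq_mul]

lemma A2_smul_val (r : R12 p) (v : ↥(A2G12 p)) :
    ((r • v : ↥(A2G12 p)) : R12 p × R12 p) = (r * (v : R12 p × R12 p).1,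
      r * (v : R12 p × R12 p).2) := rfl

lemma A2_mem_iff (x : R12 p × R12 p) :
    x ∈ A2G12 p ↔ x.1 * (of ℤ (G12t p) (t1 p) - 1) + x.2 * (of ℤ (G12t p) (t2 p) - 1) = 0 := by
  rw [A2G12, LinearMap.mem_ker, d12map_eq]

variable {H : Type*} [CommGroup H]

/-- norm relation for a cocycle into `A₂(G₁₂)` -/
lemma norm_rel (χ : H →* G12t p) {f : H → ↥(A2G12 p)}
    (hf : SCocyc ((of ℤ (G12t p)).comp χ) f) (hH : ∀ h : H, h ^ p = 1) (h1 : H) :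
    NN p (χ h1) • f h1 = 0 := by
  have hpow := hf.pow _ h1 p
  rw [hH h1, hf.one _] at hpow
  have hNN : (∑ k ∈ Finset.range p, ((of ℤ (G12t p)).comp χ) h1 ^ k) = NN p (χ h1) := by
    rw [NN]
    exact Finset.sum_congr rfl fun k _ => by rw [MonoidHom.comp_apply, ← map_pow, map_pow]
  rw [hNN] at hpow
  exact hpow.symm

/-- main lemma for the `A₂(G₁₂)` component -/
lemma P1 (hH : ∀ h : H, h ^ p = 1) (χ : H →* G12t p) {f : H → ↥(A2G12 p)}
    (hf : SCocyc ((of ℤ (G12t p)).comp χ) f) :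
    ∃ a : ↥(A2G12 p), ∀ h : H, f h = of ℤ (G12t p) (χ h) • a - a := by
  have hp0 : 0 < p := Nat.pos_of_ne_zero (NeZero.ne p)
  by_cases hcase1 : ∀ h : H, χ h = 1
  · refine ⟨0, ?_⟩
    have h1 : SCocyc (1 : H →* R12 p) f := by
      intro g h
      have hgh := hf g h
      rw [MonoidHom.comp_apply, hcase1 g, map_one, one_smul] at hgh
      rw [hgh, MonoidHom.one_apply, one_smul]
    have hv := SCocyc.vanish (1 : H →* R12 p) hp0 h1 (fun m => tf_A2 m) hH 1 1
      (h1.one _) (h1.one _) (fun h => ⟨0, 0, h, rfl, by simp⟩)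
    intro h; rw [hv h]; simp
  · push_neg at hcase1
    obtain ⟨h1, hne1⟩ := hcase1
    by_cases hcase2 : ∀ h : H, ∃ i : ℕ, χ h = (χ h1) ^ i
    · -- Case B : the image of χ is cyclic
      set t := χ h1 with htdef
      set x := f h1 with hxdef
      have hNx : NN p t • x = 0 := norm_rel χ hf hH h1
      have hNx1 : NN p t * (x : R12 p × R12 p).1 = 0 :=
        congrArg Prod.fst (congrArg Subtype.val hNx)
      have hNx2 : NN p t * (x : R12 p × R12 p).2 = 0 :=
        congrArg Prod.snd (congrArg Subtype.val hNx)
      have hdx : (x : R12 p × R12 p).1 * (of ℤ (G12t p) (t1 p) - 1)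
          + (x : R12 p × R12 p).2 * (of ℤ (G12t p) (t2 p) - 1) = 0 :=
        (A2_mem_iff _).mp x.2
      obtain ⟨a1, a2, hda, ha1, ha2⟩ := caseB hne1 _ _ hdx hNx1 hNx2
      obtain ⟨A, hA⟩ : ∃ A : ↥(A2G12 p), (A : R12 p × R12 p) = (a1, a2) :=
        ⟨⟨(a1, a2), (A2_mem_iff _).mpr hda⟩, rfl⟩
      have hxA : of ℤ (G12t p) t • A - A = x := by
        refine Subtype.ext (Prod.ext ?_ ?_)
        · show of ℤ (G12t p) t * (A : R12 p × R12 p).1 - (A : R12 p × R12 p).1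
            = (x : R12 p × R12 p).1
          rw [hA]
          show of ℤ (G12t p) t * a1 - a1 = (x : R12 p × R12 p).1
          rw [← ha1]; ring
        · show of ℤ (G12t p) t * (A : R12 p × R12 p).2 - (A : R12 p × R12 p).2
            = (x : R12 p × R12 p).2
          rw [hA]
          show of ℤ (G12t p) t * a2 - a2 = (x : R12 p × R12 p).2
          rw [← ha2]; ring
      refine ⟨A, ?_⟩
      set f' := fun h => f h - (((of ℤ (G12t p)).comp χ) h • A - A) with hf'def
      have hf' : SCocyc ((of ℤ (G12t p)).comp χ) f' := hf.sub_cobound _ A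
      have hv1 : f' h1 = 0 := by
        rw [hf'def]
        simp only [MonoidHom.comp_apply, ← htdef, ← hxdef]
        rw [hxA]
        exact sub_self x
      have hsurj : ∀ h : H, ∃ i j : ℕ, ∃ k : H, ((of ℤ (G12t p)).comp χ) k = 1 ∧
          h = h1 ^ i * 1 ^ j * k := by
        intro h
        obtain ⟨i, hi⟩ := hcase2 h
        refine ⟨i, 0, (h1 ^ i)⁻¹ * h, ?_, by group⟩
        rw [MonoidHom.comp_apply, map_mul, map_inv, map_pow, ← htdef, ← hi]
        simp [MonoidAlgebra.one_def]
      have hv := SCocyc.vanish ((of ℤ (G12t p)).comp χ) hp0 hf'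
        (fun m => tf_A2 m) hH h1 1 hv1 (hf'.one _) hsurj
      intro h
      have hh := hv h
      rw [hf'def, sub_eq_zero] at hh
      rw [hh, MonoidHom.comp_apply]
    · -- Case C : the image of χ is all of G12
      push_neg at hcase2
      obtain ⟨h2, hne2⟩ := hcase2
      set a := (toAdd (χ h1)).1 with hadef
      set b := (toAdd (χ h1)).2 with hbdef
      set c := (toAdd (χ h2)).1 with hcdef
      set d := (toAdd (χ h2)).2 with hddef
      have hab : χ h1 = ofAdd (a, b) := rfl
      have hcd : χ h2 = ofAdd (c, d) := rfl
      have hΔ : a * d - b * c ≠ 0 := by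
        intro hΔ0
        by_cases ha : a ≠ 0
        · apply hne2 ((c * a⁻¹).val)
          rw [pow_coords, hcd, ← hadef, ← hbdef, val_coe]
          congr 1
          have had : a * d = b * c := by linear_combination hΔ0
          have hd : d = a⁻¹ * (b * c) := by
            rw [← had, ← mul_assoc, inv_mul_cancel₀ ha, one_mul]
          ext
          · show c = c * a⁻¹ * a
            rw [mul_assoc, inv_mul_cancel₀ ha, mul_one]
          · show d = c * a⁻¹ * b
            rw [hd]; ring
        · push_neg at ha
          have hb : b ≠ 0 := fun hb => hne1 (by rw [hab, ha, hb]; rfl)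
          have hc : c = 0 := by
            have : b * c = 0 := by linear_combination -hΔ0 + d * ha
            exact (mul_eq_zero.mp this).resolve_left hb
          apply hne2 ((d * b⁻¹).val)
          rw [pow_coords, hcd, ← hadef, ← hbdef, val_coe]
          congr 1
          ext
          · show c = d * b⁻¹ * a
            rw [hc, ha]; ring
          · show d = d * b⁻¹ * b
            rw [mul_assoc, inv_mul_cancel₀ hb, mul_one]
      set Δ := a * d - b * c with hΔdef
      set h1' := h1 ^ (Δ⁻¹ * d).val * h2 ^ (-(Δ⁻¹ * b)).val with h1'def
      set h2' := h1 ^ (-(Δ⁻¹ * c)).val * h2 ^ (Δ⁻¹ * a).val with h2'def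
      have hχ1' : χ h1' = t1 p := by
        rw [h1'def, map_mul, map_pow, map_pow, hab, hcd, pow_coords, pow_coords,
          val_coe, val_coe, ← ofAdd_add]
        show ofAdd _ = ofAdd ((1 : ZMod p), (0 : ZMod p))
        congr 1
        rw [Prod.mk_add_mk]
        have h2' : Δ⁻¹ * Δ = 1 := inv_mul_cancel₀ hΔ
        simp only [toAdd_ofAdd]
        congr 1
        · linear_combination h2'
        · ring
      have hχ2' : χ h2' = t2 p := by
        rw [h2'def, map_mul, map_pow, map_pow, hab, hcd, pow_coords, pow_coords,
          val_coe, val_coe, ← ofAdd_add]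
        show ofAdd _ = ofAdd ((0 : ZMod p), (1 : ZMod p))
        congr 1
        rw [Prod.mk_add_mk]
        have h2' : Δ⁻¹ * Δ = 1 := inv_mul_cancel₀ hΔ
        simp only [toAdd_ofAdd]
        congr 1
        · ring
        · linear_combination h2'
      -- step 1 : kill the value at h1'
      set x := f h1' with hxdef
      have hNx : NN p (t1 p) • x = 0 := by
        have := norm_rel χ hf hH h1'
        rwa [hχ1'] at this
      have hNx1 : NN p (t1 p) * (x : R12 p × R12 p).1 = 0 :=
        congrArg Prod.fst (congrArg Subtype.val hNx)
      have hNx2 : NN p (t1 p) * (x : R12 p × R12 p).2 = 0 :=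
        congrArg Prod.snd (congrArg Subtype.val hNx)
      have hdx : (x : R12 p × R12 p).1 * (of ℤ (G12t p) (t1 p) - 1)
          + (x : R12 p × R12 p).2 * (of ℤ (G12t p) (t2 p) - 1) = 0 :=
        (A2_mem_iff _).mp x.2
      obtain ⟨a1, a2, hda, ha1, ha2⟩ := caseB t1_ne_one _ _ hdx hNx1 hNx2
      obtain ⟨A, hA⟩ : ∃ A : ↥(A2G12 p), (A : R12 p × R12 p) = (a1, a2) :=
        ⟨⟨(a1, a2), (A2_mem_iff _).mpr hda⟩, rfl⟩
      have hxA : of ℤ (G12t p) (t1 p) • A - A = x := by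
        refine Subtype.ext (Prod.ext ?_ ?_)
        · show of ℤ (G12t p) (t1 p) * (A : R12 p × R12 p).1 - (A : R12 p × R12 p).1
            = (x : R12 p × R12 p).1
          rw [hA]
          show of ℤ (G12t p) (t1 p) * a1 - a1 = (x : R12 p × R12 p).1
          rw [← ha1]; ring
        · show of ℤ (G12t p) (t1 p) * (A : R12 p × R12 p).2 - (A : R12 p × R12 p).2
            = (x : R12 p × R12 p).2
          rw [hA]
          show of ℤ (G12t p) (t1 p) * a2 - a2 = (x : R12 p × R12 p).2
          rw [← ha2]; ring
      set f' := fun h => f h - (((of ℤ (G12t p)).comp χ) h • A - A) with hf'def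
      have hf' : SCocyc ((of ℤ (G12t p)).comp χ) f' := hf.sub_cobound _ A
      have hv1 : f' h1' = 0 := by
        rw [hf'def]
        simp only [MonoidHom.comp_apply, hχ1', ← hxdef]
        rw [hxA]
        exact sub_self x
      -- step 2 : kill the value at h2'
      set y := f' h2' with hydef
      have hNy : NN p (t2 p) • y = 0 := by
        have := norm_rel χ hf' hH h2'
        rwa [hχ2'] at this
      have hfixy : of ℤ (G12t p) (t1 p) • y = y := by
        have e1 := hf' h1' h2'
        have e2 := hf' h2' h1'
        rw [mul_comm h1' h2'] at e1
        have e3 := e2.symm.trans e1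
        rw [hv1, smul_zero, zero_add, add_zero, MonoidHom.comp_apply, hχ1'] at e3
        rw [← hydef] at e3
        exact e3.symm
      have hNy1 : NN p (t2 p) * (y : R12 p × R12 p).1 = 0 :=
        congrArg Prod.fst (congrArg Subtype.val hNy)
      have hNy2 : NN p (t2 p) * (y : R12 p × R12 p).2 = 0 :=
        congrArg Prod.snd (congrArg Subtype.val hNy)
      have hfy1 : of ℤ (G12t p) (t1 p) * (y : R12 p × R12 p).1 = (y : R12 p × R12 p).1 :=
        congrArg Prod.fst (congrArg Subtype.val hfixy)
      have hfy2 : of ℤ (G12t p) (t1 p) * (y : R12 p × R12 p).2 = (y : R12 p × R12 p).2 :=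
        congrArg Prod.snd (congrArg Subtype.val hfixy)
      have hdy : (y : R12 p × R12 p).1 * (of ℤ (G12t p) (t1 p) - 1)
          + (y : R12 p × R12 p).2 * (of ℤ (G12t p) (t2 p) - 1) = 0 :=
        (A2_mem_iff _).mp y.2
      obtain ⟨b1, b2, hdb, hbf1, hbf2, hb1, hb2⟩ := caseC _ _ hdy hfy1 hfy2 hNy1 hNy2
      obtain ⟨B, hB⟩ : ∃ B : ↥(A2G12 p), (B : R12 p × R12 p) = (b1, b2) :=
        ⟨⟨(b1, b2), (A2_mem_iff _).mpr hdb⟩, rfl⟩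
      have hyB : of ℤ (G12t p) (t2 p) • B - B = y := by
        refine Subtype.ext (Prod.ext ?_ ?_)
        · show of ℤ (G12t p) (t2 p) * (B : R12 p × R12 p).1 - (B : R12 p × R12 p).1
            = (y : R12 p × R12 p).1
          rw [hB]
          show of ℤ (G12t p) (t2 p) * b1 - b1 = (y : R12 p × R12 p).1
          rw [← hb1]; ring
        · show of ℤ (G12t p) (t2 p) * (B : R12 p × R12 p).2 - (B : R12 p × R12 p).2
            = (y : R12 p × R12 p).2
          rw [hB]
          show of ℤ (G12t p) (t2 p) * b2 - b2 = (y : R12 p × R12 p).2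
          rw [← hb2]; ring
      have hBfix : of ℤ (G12t p) (t1 p) • B - B = 0 := by
        refine Subtype.ext (Prod.ext ?_ ?_)
        · show of ℤ (G12t p) (t1 p) * (B : R12 p × R12 p).1 - (B : R12 p × R12 p).1
            = ((0 : ↥(A2G12 p)) : R12 p × R12 p).1
          rw [hB]
          show of ℤ (G12t p) (t1 p) * b1 - b1 = (0 : R12 p)
          rw [← hbf1]; ring
        · show of ℤ (G12t p) (t1 p) * (B : R12 p × R12 p).2 - (B : R12 p × R12 p).2
            = ((0 : ↥(A2G12 p)) : R12 p × R12 p).2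
          rw [hB]
          show of ℤ (G12t p) (t1 p) * b2 - b2 = (0 : R12 p)
          rw [← hbf2]; ring
      set f'' := fun h => f' h - (((of ℤ (G12t p)).comp χ) h • B - B) with hf''def
      have hf'' : SCocyc ((of ℤ (G12t p)).comp χ) f'' := hf'.sub_cobound _ B
      have hv2'' : f'' h2' = 0 := by
        rw [hf''def]
        simp only [MonoidHom.comp_apply, hχ2', ← hydef]
        rw [hyB]
        exact sub_self y
      have hv1'' : f'' h1' = 0 := by
        rw [hf''def]
        simp only [MonoidHom.comp_apply, hχ1']
        rw [hv1, hBfix]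
        exact (sub_zero 0)
      have hsurj : ∀ h : H, ∃ i j : ℕ, ∃ k : H, ((of ℤ (G12t p)).comp χ) k = 1 ∧
          h = h1' ^ i * h2' ^ j * k := by
        intro h
        refine ⟨(toAdd (χ h)).1.val, (toAdd (χ h)).2.val,
          (h1' ^ (toAdd (χ h)).1.val * h2' ^ (toAdd (χ h)).2.val)⁻¹ * h, ?_, by group⟩
        have hχk : χ ((h1' ^ (toAdd (χ h)).1.val * h2' ^ (toAdd (χ h)).2.val)⁻¹ * h) = 1 := by
          rw [map_mul, map_inv, map_mul, map_pow, map_pow, hχ1', hχ2', decomp12]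
          simp
        rw [MonoidHom.comp_apply, hχk, map_one]
      have hv := SCocyc.vanish ((of ℤ (G12t p)).comp χ) hp0 hf''
        (fun m => tf_A2 m) hH h1' h2' hv1'' hv2'' hsurj
      refine ⟨A + B, ?_⟩
      intro h
      have hh := hv h
      rw [hf''def, sub_eq_zero] at hh
      have hh' : f h - (((of ℤ (G12t p)).comp χ) h • A - A)
          = ((of ℤ (G12t p)).comp χ) h • B - B := hh
      have hh2 : f h = (((of ℤ (G12t p)).comp χ) h • A - A)
          + (((of ℤ (G12t p)).comp χ) h • B - B) := by
        rw [← hh']; abel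
      rw [hh2, smul_add, MonoidHom.comp_apply]
      abel

end Comp1

/-! ## main theorem -/

theorem statement3' (p : ℕ) [NeZero p] (hp : p.Prime) (hodd : p ≠ 2)
    (H : Subgroup (Gp p)) (f : H → Qc p)
    (hf : IsOneCocycle (resAct H (actQ p)) f) :
    IsOneCoboundary (resAct H (actQ p)) f := by
  haveI : Fact p.Prime := ⟨hp⟩
  have hH : ∀ h : ↥H, h ^ p = 1 := by
    intro h
    refine Subtype.ext ?_
    have h1 : ((h ^ p : ↥H) : Gp p) = (h : Gp p) ^ p := by
      exact SubmonoidClass.coe_pow h p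
    rw [h1, gp_pow_p]
    rfl
  set χ : ↥H →* G12t p := (π12 p).comp H.subtype with hχdef
  set ψ3 : ↥H →* Cpt p := (π3 p).comp H.subtype with hψ3def
  set ψ4 : ↥H →* Cpt p := (π4 p).comp H.subtype with hψ4def
  have hc1 : SCocyc ((of ℤ (G12t p)).comp χ) (fun h => (f h).1) :=
    fun g h => congrArg Prod.fst (hf g h)
  have hc3a : SCocyc ((of ℤ (Cpt p)).comp ψ3) (fun h => (f h).2.1.1) :=
    fun g h => congrArg (fun q : Qc p => q.2.1.1) (hf g h)
  have hc3b : SCocyc ((of ℤ (Cpt p)).comp ψ3) (fun h => (f h).2.1.2) :=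
    fun g h => congrArg (fun q : Qc p => q.2.1.2) (hf g h)
  have hc4a : SCocyc ((of ℤ (Cpt p)).comp ψ4) (fun h => (f h).2.2.1) :=
    fun g h => congrArg (fun q : Qc p => q.2.2.1) (hf g h)
  have hc4b : SCocyc ((of ℤ (Cpt p)).comp ψ4) (fun h => (f h).2.2.2) :=
    fun g h => congrArg (fun q : Qc p => q.2.2.2) (hf g h)
  obtain ⟨a1, ha1⟩ := P1 hH χ hc1
  have h3a := P3a hH ψ3 hc3a
  obtain ⟨a3b, ha3b⟩ := P3b hH ψ3 hc3b
  have h4a := P3a hH ψ4 hc4a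
  obtain ⟨a4b, ha4b⟩ := P3b hH ψ4 hc4b
  refine ⟨(a1, (0, a3b), (0, a4b)), fun g => ?_⟩
  refine Prod.ext ?_ (Prod.ext (Prod.ext ?_ ?_) (Prod.ext ?_ ?_))
  · exact ha1 g
  · show (f g).2.1.1 = of ℤ (Cpt p) (π3 p (g : Gp p)) • (0 : ↥(A2C p)) - 0
    rw [smul_zero, sub_zero]
    exact h3a g
  · exact ha3b g
  · show (f g).2.2.1 = of ℤ (Cpt p) (π4 p (g : Gp p)) • (0 : ↥(A2C p)) - 0
    rw [smul_zero, sub_zero]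
    exact h4a g
  · exact ha4b g

theorem statement3 (p : ℕ) [NeZero p] (hp : p.Prime) (hodd : p ≠ 2)
    (H : Subgroup (Gp p)) (f : H → Qc p)
    (hf : IsOneCocycle (resAct H (actQ p)) f) :
    IsOneCoboundary (resAct H (actQ p)) f :=
  statement3' p hp hodd H f hf

end
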